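/- Let u be a finite N-player game with product matrix M, and let x : ℝ → X be differentiable and satisfy the replicator equation: for every player i, strategy s ∈ S_i, and time t, (x^i_s)′(t) = x^i_s(t)(𝕌_i(s; x(t)_{-i}) − 𝕌_i(x(t))). Define z_p(t) = ∏_i x^i_{p_i}(t) for each pure profile p. Then for every pure profile p and every t, z_p′(t) = z_p(t) · Σ_{q∈Z} M_{p,q} z_q(t). -/

import Mathlib

open Finset Filter

variable {N : ℕ}

/-- A point of the ambient space `∏ i, ℝ^{S i}` is a mixed profile if each
coordinate is a probability vector. -/
def IsMixed {S : Fin N → Type*} [∀ i, Fintype (S i)] (x : ∀ i, S i → ℝ) : Prop :=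
  (∀ i s, 0 ≤ x i s) ∧ ∀ i, ∑ s, x i s = 1

/-- Mass that the product distribution of `x` puts on the pure profile `p`. -/
noncomputable def zmass {S : Fin N → Type*} [∀ i, Fintype (S i)]
    (x : ∀ i, S i → ℝ) (p : ∀ i, S i) : ℝ :=
  ∏ i, x i (p i)

/-- Expected utility of player `i` at mixed profile `x`. -/
noncomputable def expU {S : Fin N → Type*} [∀ i, Fintype (S i)] [∀ i, DecidableEq (S i)]
    (u : (∀ i, S i) → Fin N → ℝ) (x : ∀ i, S i → ℝ) (i : Fin N) : ℝ :=
  ∑ p : ∀ i, S i, zmass x p * u p i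

/-- Expected utility of pure strategy `s` for player `i` against `x₋ᵢ`. -/
noncomputable def expUpure {S : Fin N → Type*} [∀ i, Fintype (S i)] [∀ i, DecidableEq (S i)]
    (u : (∀ i, S i) → Fin N → ℝ) (x : ∀ i, S i → ℝ) (i : Fin N) (s : S i) : ℝ :=
  ∑ p : ∀ i, S i, zmass x p * u (Function.update p i s) i

/-- The replicator vector field (defined by its polynomial formula on the ambient space). -/
noncomputable def repl {S : Fin N → Type*} [∀ i, Fintype (S i)] [∀ i, DecidableEq (S i)]
    (u : (∀ i, S i) → Fin N → ℝ) (x : ∀ i, S i → ℝ) (i : Fin N) (s : S i) : ℝ :=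
  x i s * (expUpure u x i s - expU u x i)

/-- `p` and `q` are `i`-comparable: distinct and differing only in player `i`'s strategy. -/
def IComparable {S : Fin N → Type*} (i : Fin N) (p q : ∀ i, S i) : Prop :=
  p ≠ q ∧ ∀ j, j ≠ i → p j = q j

/-- Arc of the preference graph. -/
def PrefArc {S : Fin N → Type*} (u : (∀ i, S i) → Fin N → ℝ) (p q : ∀ i, S i) : Prop :=
  ∃ i, IComparable i p q ∧ u p i < u q i

/-- The game is generic: comparable profiles give the moving player distinct payoffs. -/
def Generic {S : Fin N → Type*} (u : (∀ i, S i) → Fin N → ℝ) : Prop :=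
  ∀ i p q, IComparable i p q → u p i ≠ u q i

/-- `H` is a sink strongly connected component of the preference graph. -/
def SinkEquilibrium {S : Fin N → Type*} (u : (∀ i, S i) → Fin N → ℝ)
    (H : Set (∀ i, S i)) : Prop :=
  H.Nonempty ∧
  (∀ p ∈ H, ∀ q ∈ H,
    Relation.ReflTransGen (fun a b => a ∈ H ∧ b ∈ H ∧ PrefArc u a b) p q) ∧
  (∀ p ∈ H, ∀ q, PrefArc u p q → q ∈ H)

/-- The content of a set of pure profiles. -/
def content {S : Fin N → Type*} [∀ i, Fintype (S i)] (H : Set (∀ i, S i)) :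
    Set (∀ i, S i → ℝ) :=
  {x | IsMixed x ∧ ∀ p, 0 < zmass x p → p ∈ H}

/-- A replicator flow on the strategy space. -/
def IsReplicatorFlow {S : Fin N → Type*} [∀ i, Fintype (S i)] [∀ i, DecidableEq (S i)]
    (u : (∀ i, S i) → Fin N → ℝ)
    (φ : ℝ → (∀ i, S i → ℝ) → (∀ i, S i → ℝ)) : Prop :=
  (∀ x, IsMixed x → ∀ t, IsMixed (φ t x)) ∧
  (∀ x, φ 0 x = x) ∧
  (∀ s t x, φ (s + t) x = φ s (φ t x)) ∧
  (∀ x, IsMixed x → ∀ t (i : Fin N) (s : S i),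
    HasDerivAt (fun τ => φ τ x i s) (repl u (φ t x) i s) t)

/-- Nash equilibrium of the game `u` restricted to the subgame `T`. -/
def NashOn {S : Fin N → Type*} [∀ i, Fintype (S i)] [∀ i, DecidableEq (S i)]
    (u : (∀ i, S i) → Fin N → ℝ) (T : ∀ i, Finset (S i)) (x : ∀ i, S i → ℝ) : Prop :=
  IsMixed x ∧ (∀ i s, x i s ≠ 0 → s ∈ T i) ∧
  ∀ i, ∀ s ∈ T i, expUpure u x i s ≤ expU u x i

/-- Quasi-strict Nash equilibrium of the game `u` restricted to the subgame `T`. -/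
def QuasiStrictNashOn {S : Fin N → Type*} [∀ i, Fintype (S i)] [∀ i, DecidableEq (S i)]
    (u : (∀ i, S i) → Fin N → ℝ) (T : ∀ i, Finset (S i)) (x : ∀ i, S i → ℝ) : Prop :=
  NashOn u T x ∧ ∀ i, ∀ s ∈ T i, x i s = 0 → expUpure u x i s < expU u x i

/-- `x` is a local source of the sink equilibrium `H` in the subgame `T`. -/
def LocalSource {S : Fin N → Type*} [∀ i, Fintype (S i)] [∀ i, DecidableEq (S i)]
    (u : (∀ i, S i) → Fin N → ℝ) (H : Set (∀ i, S i)) (T : ∀ i, Finset (S i))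
    (x : ∀ i, S i → ℝ) : Prop :=
  (∀ i, (T i).Nonempty) ∧
  x ∈ content H ∧
  (∀ i s, x i s ≠ 0 → s ∈ T i) ∧
  (∃ p : ∀ i, S i, (∀ i, p i ∈ T i) ∧ p ∉ H) ∧
  QuasiStrictNashOn (fun p i => -(u p i)) T x

/-- The product matrix of the game: `M q p = Σ_i (u_i(q_i; p₋ᵢ) − u_i(p))`. -/
noncomputable def prodMat {S : Fin N → Type*} [∀ i, Fintype (S i)] [∀ i, DecidableEq (S i)]
    (u : (∀ i, S i) → Fin N → ℝ) (q p : ∀ i, S i) : ℝ :=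
  ∑ i, (u (Function.update p i (q i)) i - u p i)

/-- If `x(t)` is a solution of the replicator equation in the strategy
space, then the induced product distribution `z_p(t) = ∏_i x^i_{p_i}(t)` satisfies
`z_p' = z_p ⬝ Σ_q M_{p,q} z_q`. -/
theorem statement8
    {S : Fin N → Type*} [∀ i, Fintype (S i)] [∀ i, DecidableEq (S i)] [∀ i, Nonempty (S i)]
    (u : (∀ i, S i) → Fin N → ℝ)
    (x : ℝ → ∀ i, S i → ℝ) (hmix : ∀ t, IsMixed (x t))
    (hode : ∀ (t : ℝ) (i : Fin N) (s : S i),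
      HasDerivAt (fun τ => x τ i s) (x t i s * (expUpure u (x t) i s - expU u (x t) i)) t)
    (p : ∀ i, S i) (t : ℝ) :
    HasDerivAt (fun τ => zmass (x τ) p)
      (zmass (x t) p * ∑ q : ∀ i, S i, prodMat u p q * zmass (x t) q) t := by
  have key : HasDerivAt (fun τ => zmass (x τ) p)
      (∑ i, (∏ j ∈ Finset.univ.erase i, x t j (p j)) •
        (x t i (p i) * (expUpure u (x t) i (p i) - expU u (x t) i))) t := by
    have := HasDerivAt.fun_finsetProd (u := Finset.univ)
      (f := fun i τ => x τ i (p i))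
      (f' := fun i => x t i (p i) * (expUpure u (x t) i (p i) - expU u (x t) i))
      (x := t) (fun i _ => hode t i (p i))
    simpa [zmass] using this
  have hsum : (∑ q : ∀ i, S i, prodMat u p q * zmass (x t) q)
      = ∑ i, (expUpure u (x t) i (p i) - expU u (x t) i) := by
    simp only [prodMat, Finset.sum_mul]
    rw [Finset.sum_comm]
    apply Finset.sum_congr rfl
    intro i _
    simp only [expUpure, expU, ← Finset.sum_sub_distrib, ← mul_sub, sub_mul]
    apply Finset.sum_congr rfl
    intro q _
    ring
  have heq : (∑ i, (∏ j ∈ Finset.univ.erase i, x t j (p j)) •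
        (x t i (p i) * (expUpure u (x t) i (p i) - expU u (x t) i)))
      = zmass (x t) p * ∑ q : ∀ i, S i, prodMat u p q * zmass (x t) q := by
    rw [hsum, Finset.mul_sum]
    apply Finset.sum_congr rfl
    intro i _
    rw [smul_eq_mul, ← mul_assoc, mul_comm (∏ j ∈ Finset.univ.erase i, x t j (p j)),
      zmass]
    congr 1
    exact Finset.mul_prod_erase Finset.univ (fun j => x t j (p j)) (Finset.mem_univ i)
  rw [← heq]
  exact key
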